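/- Let m ≥ 3 be odd and g(x) = Σ_{k=(m+1)/2}^{m} C(m,k) x^k (1−x)^{m−k}. Then g(x) ≤ x for all x ∈ [0, 1/2] and g(x) ≥ x for all x ∈ [1/2, 1]. -/

import Mathlib

/-- The majority polynomial: probability that `Bin(m,x) ≥ (m+1)/2`. -/
noncomputable def majPoly (m : ℕ) (x : ℝ) : ℝ :=
  ∑ k ∈ Finset.Icc ((m + 1) / 2) m, (m.choose k : ℝ) * x ^ k * (1 - x) ^ (m - k)

lemma term_deriv (m k : ℕ) (hk1 : 1 ≤ k) (hm : 1 ≤ m) (x : ℝ) :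
    HasDerivAt (fun y : ℝ => (m.choose k : ℝ) * y ^ k * (1 - y) ^ (m - k))
      (((m * (m-1).choose (k-1) : ℕ) : ℝ) * x ^ (k-1) * (1 - x) ^ (m - k)
        - ((m * (m-1).choose k : ℕ) : ℝ) * x ^ k * (1 - x) ^ (m - 1 - k)) x := by
  have h1 : HasDerivAt (fun y : ℝ => (m.choose k : ℝ) * y ^ k)
      ((m.choose k : ℝ) * ((k : ℝ) * x ^ (k-1))) x := (hasDerivAt_pow k x).const_mul _
  have h2 : HasDerivAt (fun y : ℝ => (1 - y) ^ (m - k))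
      (((m - k : ℕ) : ℝ) * (1 - x) ^ (m - k - 1) * (-1)) x := by
    have hb : HasDerivAt (fun y : ℝ => 1 - y) (-1) x := by
      simpa using (hasDerivAt_id' x).const_sub (1:ℝ)
    exact hb.pow (m - k)
  have h := h1.fun_mul h2
  refine h.congr_deriv ?_
  have e1 : (m : ℝ) * ((m-1).choose (k-1) : ℝ) = (m.choose k : ℝ) * k := by
    have := Nat.add_one_mul_choose_eq (m-1) (k-1)
    rw [show m-1+1 = m by omega, show k-1+1 = k by omega] at this
    exact_mod_cast congrArg (Nat.cast : ℕ → ℝ) this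
  have e2 : (m : ℝ) * ((m-1).choose k : ℝ) = (m.choose k : ℝ) * ((m - k : ℕ) : ℝ) := by
    have := Nat.choose_mul_succ_eq (m-1) k
    rw [show m-1+1 = m by omega] at this
    have := congrArg (Nat.cast : ℕ → ℝ) this
    push_cast at this
    linarith
  have e3 : m - 1 - k = m - k - 1 := by omega
  push_cast [e1, e2, e3]
  ring

lemma maj_deriv (t : ℕ) (x : ℝ) :
    HasDerivAt (majPoly (2*t+1))
      ((((2*t+1) * (2*t).choose t : ℕ) : ℝ) * (x * (1-x)) ^ t) x := by
  have hIcc : (2*t+1 + 1) / 2 = t + 1 := by omega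
  set A : ℕ → ℝ := fun k =>
    (((2*t+1) * (2*t).choose (k-1) : ℕ) : ℝ) * x ^ (k-1) * (1 - x) ^ (2*t+1 - k) with hA
  have hsum : HasDerivAt (majPoly (2*t+1))
      (∑ k ∈ Finset.Icc (t+1) (2*t+1), (A k - A (k+1))) x := by
    have hfun : majPoly (2*t+1) = fun y => ∑ k ∈ Finset.Icc (t+1) (2*t+1),
        ((2*t+1).choose k : ℝ) * y ^ k * (1 - y) ^ (2*t+1 - k) := by
      funext y; rw [majPoly, hIcc]
    rw [hfun]
    apply HasDerivAt.fun_sum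
    intro k hk
    simp only [Finset.mem_Icc] at hk
    have heq : A k - A (k+1)
        = (((2*t+1) * (2*t+1-1).choose (k-1) : ℕ) : ℝ) * x ^ (k-1) * (1 - x) ^ (2*t+1 - k)
        - (((2*t+1) * (2*t+1-1).choose k : ℕ) : ℝ) * x ^ k * (1 - x) ^ (2*t+1 - 1 - k) := by
      simp only [hA, Nat.add_sub_cancel]
      rw [show 2*t+1 - (k+1) = 2*t+1-1-k by omega, show 2*t+1-1 = 2*t by omega]
    rw [heq]
    exact term_deriv (2*t+1) k (by omega) (by omega) x
  have htel : ∑ k ∈ Finset.Icc (t+1) (2*t+1), (A k - A (k+1)) = A (t+1) - A (2*t+2) := by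
    rw [← Finset.Ico_add_one_right_eq_Icc, Finset.sum_Ico_eq_sum_range]
    rw [show 2*t+1+1 - (t+1) = t+1 by omega]
    have hcong : ∀ i ∈ Finset.range (t+1),
        A (t+1+i) - A (t+1+i+1) = A (t+1+i) - A (t+1+(i+1)) := by
      intro i _; rw [show t+1+i+1 = t+1+(i+1) by omega]
    rw [Finset.sum_congr rfl hcong, Finset.sum_range_sub' (fun i => A (t+1+i)) (t+1)]
    rw [show t+1+(t+1) = 2*t+2 by omega, show t+1+0 = t+1 by omega]
  have hA1 : A (2*t+2) = 0 := by
    simp [hA, Nat.choose_eq_zero_of_lt (show 2*t < 2*t+2-1 by omega)]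
  have hA0 : A (t+1) = (((2*t+1) * (2*t).choose t : ℕ) : ℝ) * (x * (1-x)) ^ t := by
    simp only [hA, Nat.add_sub_cancel]
    rw [show 2*t+1 - (t+1) = t by omega, mul_pow]
    ring
  rw [htel, hA1, hA0, sub_zero] at hsum
  exact hsum

lemma maj_zero (m : ℕ) (hm : 1 ≤ m) : majPoly m 0 = 0 := by
  rw [majPoly]
  apply Finset.sum_eq_zero
  intro k hk
  simp only [Finset.mem_Icc] at hk
  have : k ≠ 0 := by omega
  simp [zero_pow this]

lemma maj_symm (t : ℕ) (x : ℝ) : majPoly (2*t+1) x + majPoly (2*t+1) (1-x) = 1 := by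
  have hIcc : (2*t+1 + 1) / 2 = t + 1 := by omega
  have h2 : majPoly (2*t+1) (1-x)
      = ∑ k ∈ Finset.Icc 0 t, ((2*t+1).choose k : ℝ) * x ^ k * (1-x) ^ (2*t+1-k) := by
    rw [majPoly, hIcc]
    refine Finset.sum_nbij' (fun k => 2*t+1 - k) (fun k => 2*t+1 - k) ?_ ?_ ?_ ?_ ?_
    · intro a ha; simp only [Finset.mem_Icc] at ha ⊢; omega
    · intro a ha; simp only [Finset.mem_Icc] at ha ⊢; omega
    · intro a ha; simp only [Finset.mem_Icc] at ha
      show 2*t+1 - (2*t+1 - a) = a; omega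
    · intro a ha; simp only [Finset.mem_Icc] at ha
      show 2*t+1 - (2*t+1 - a) = a; omega
    · intro a ha
      simp only [Finset.mem_Icc] at ha
      rw [Nat.choose_symm (by omega : a ≤ 2*t+1), show 2*t+1 - (2*t+1 - a) = a by omega,
        show (1:ℝ) - (1-x) = x by ring]
      ring
  have hunion : Finset.range (2*t+1+1) = Finset.Icc 0 t ∪ Finset.Icc (t+1) (2*t+1) := by
    ext a
    simp only [Finset.mem_range, Finset.mem_union, Finset.mem_Icc]
    omega
  have hdisj : Disjoint (Finset.Icc 0 t) (Finset.Icc (t+1) (2*t+1)) := by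
    rw [Finset.disjoint_left]
    intro a ha hb
    simp only [Finset.mem_Icc] at ha hb
    omega
  have hb : ∑ k ∈ Finset.range (2*t+1+1),
      ((2*t+1).choose k : ℝ) * x ^ k * (1-x) ^ (2*t+1-k) = (x + (1-x))^(2*t+1) := by
    rw [add_pow]
    apply Finset.sum_congr rfl
    intro k _; ring
  have : majPoly (2*t+1) x + majPoly (2*t+1) (1-x)
      = ∑ k ∈ Finset.range (2*t+1+1), ((2*t+1).choose k : ℝ) * x ^ k * (1-x) ^ (2*t+1-k) := by
    rw [h2, majPoly, hIcc, hunion, Finset.sum_union hdisj, add_comm]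
  rw [this, hb]
  norm_num


lemma maj_integral (t : ℕ) (x : ℝ) :
    majPoly (2*t+1) x
      = (∫ s in (0:ℝ)..x, ((((2*t+1) * (2*t).choose t : ℕ) : ℝ) * (s*(1-s))^t - 1)) + x := by
  have hcont : Continuous fun s : ℝ =>
      ((((2*t+1) * (2*t).choose t : ℕ) : ℝ) * (s*(1-s))^t) := by fun_prop
  have h1 : ∫ s in (0:ℝ)..x, ((((2*t+1) * (2*t).choose t : ℕ) : ℝ) * (s*(1-s))^t)
      = majPoly (2*t+1) x := by
    rw [intervalIntegral.integral_eq_sub_of_hasDerivAt (fun s _ => maj_deriv t s)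
      (hcont.intervalIntegrable 0 x), maj_zero _ (by omega), sub_zero]
  have h2 : (∫ s in (0:ℝ)..x, ((((2*t+1) * (2*t).choose t : ℕ) : ℝ) * (s*(1-s))^t - 1))
      = (∫ s in (0:ℝ)..x, ((((2*t+1) * (2*t).choose t : ℕ) : ℝ) * (s*(1-s))^t))
        - ∫ s in (0:ℝ)..x, (1:ℝ) :=
    intervalIntegral.integral_sub (hcont.intervalIntegrable 0 x) intervalIntegrable_const
  rw [h2, h1]
  simp

lemma maj_half (t : ℕ) : majPoly (2*t+1) (1/2) = 1/2 := by
  have := maj_symm t (1/2)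
  norm_num at this
  linarith

lemma maj_le_lower (t : ℕ) (x : ℝ) (hx0 : 0 ≤ x) (hx : x ≤ 1/2) :
    majPoly (2*t+1) x ≤ x := by
  set c : ℝ := (((2*t+1) * (2*t).choose t : ℕ) : ℝ) with hc
  set ψ : ℝ → ℝ := fun s => c * (s*(1-s))^t - 1 with hψ
  have hcψ : Continuous ψ := by fun_prop
  have hmono : ∀ a b : ℝ, 0 ≤ a → a ≤ b → b ≤ 1/2 → ψ a ≤ ψ b := by
    intro a b ha hab hb
    have hcn : (0:ℝ) ≤ c := by positivity
    have h1 : a*(1-a) ≤ b*(1-b) := by nlinarith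
    have h0 : 0 ≤ a*(1-a) := by nlinarith
    have := pow_le_pow_left₀ h0 h1 t
    simp only [hψ]
    nlinarith [mul_le_mul_of_nonneg_left this hcn]
  have hint : ∀ y : ℝ, majPoly (2*t+1) y = (∫ s in (0:ℝ)..y, ψ s) + y := by
    intro y
    have := maj_integral t y
    simpa only [hψ, hc] using this
  have hhalf : (∫ s in (0:ℝ)..(1/2:ℝ), ψ s) = 0 := by
    have := hint (1/2)
    rw [maj_half t] at this
    linarith
  have key : (∫ s in (0:ℝ)..x, ψ s) ≤ 0 := by
    rcases le_or_gt (ψ x) 0 with hneg | hpos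
    · have : (0:ℝ) ≤ ∫ s in (0:ℝ)..x, -ψ s := by
        apply intervalIntegral.integral_nonneg hx0
        intro u hu
        have := hmono u x hu.1 hu.2 hx
        simp only [neg_nonneg]
        linarith
      rw [intervalIntegral.integral_neg] at this
      linarith
    · have hadj : (∫ s in (0:ℝ)..x, ψ s) + (∫ s in x..(1/2:ℝ), ψ s)
          = ∫ s in (0:ℝ)..(1/2:ℝ), ψ s :=
        intervalIntegral.integral_add_adjacent_intervals
          (hcψ.intervalIntegrable 0 x) (hcψ.intervalIntegrable x (1/2))
      have hpos2 : (0:ℝ) ≤ ∫ s in x..(1/2:ℝ), ψ s := by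
        apply intervalIntegral.integral_nonneg hx
        intro u hu
        have := hmono x u hx0 hu.1 hu.2
        linarith
      rw [hhalf] at hadj
      linarith
  have := hint x
  linarith

theorem majPoly_le_id_on_lower_half (m : ℕ) (hm : Odd m) (hm3 : 3 ≤ m) :
    (∀ x ∈ Set.Icc (0:ℝ) (1/2), majPoly m x ≤ x) ∧
    (∀ x ∈ Set.Icc (1/2 : ℝ) 1, x ≤ majPoly m x) := by
  obtain ⟨t, rfl⟩ : ∃ t, m = 2*t+1 := by
    obtain ⟨r, hr⟩ := hm; exact ⟨r, by omega⟩
  constructor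
  · intro x hx
    exact maj_le_lower t x hx.1 hx.2
  · intro x hx
    have h1 : majPoly (2*t+1) (1-x) ≤ 1-x :=
      maj_le_lower t (1-x) (by linarith [hx.2]) (by linarith [hx.1])
    have := maj_symm t x
    linarith
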